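/- arXiv:1508.05908 — 3 statements merged into one kernel-verified Lean document; each statement's English description precedes it below -/
import Mathlib

section
/- Let C be a monoidal category with unit object 𝟙, and let X, Y be objects of C equipped with an exact pairing: morphisms η : 𝟙 → X ⊗ Y (coevaluation) and ε : Y ⊗ X → 𝟙 (evaluation) satisfying the two triangle (zigzag) identities. Suppose e : 𝟙 → X and f : 𝟙 → Y are morphisms such that η equals the composite 𝟙 ≅ 𝟙 ⊗ 𝟙 → X ⊗ Y of the inverse left unitor with e ⊗ f, and such that the composite 𝟙 ≅ 𝟙 ⊗ 𝟙 → Y ⊗ X → 𝟙 of the inverse left unitor with f ⊗ e and then ε equals the identity of 𝟙. Then e and f are isomorphisms; in particular X and Y are both isomorphic to the unit object 𝟙. -/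
open CategoryTheory MonoidalCategory

/-- If `(X, Y)` carry an exact pairing whose coevaluation factors through pointings
`e : 𝟙 → X`, `f : 𝟙 → Y`, and the evaluation pairs the pointings to the identity,
then `e` and `f` are isomorphisms; in particular `X` and `Y` are isomorphic to the
unit object. -/
theorem stmt_5 (C : Type*) [Category C] [MonoidalCategory C] (X Y : C)
    (η : 𝟙_ C ⟶ X ⊗ Y) (ε : Y ⊗ X ⟶ 𝟙_ C)
    (zig₁ : η ▷ X ≫ (α_ X Y X).hom ≫ X ◁ ε = (λ_ X).hom ≫ (ρ_ X).inv)
    (zig₂ : Y ◁ η ≫ (α_ Y X Y).inv ≫ ε ▷ Y = (ρ_ Y).hom ≫ (λ_ Y).inv)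
    (e : 𝟙_ C ⟶ X) (f : 𝟙_ C ⟶ Y)
    (h₁ : η = (λ_ (𝟙_ C)).inv ≫ (e ⊗ₘ f))
    (h₂ : (λ_ (𝟙_ C)).inv ≫ (f ⊗ₘ e) ≫ ε = 𝟙 (𝟙_ C)) :
    IsIso e ∧ IsIso f ∧ Nonempty (X ≅ 𝟙_ C) ∧ Nonempty (Y ≅ 𝟙_ C) := by
  set g : X ⟶ 𝟙_ C := (λ_ X).inv ≫ f ▷ X ≫ ε with hg
  set k : Y ⟶ 𝟙_ C := (ρ_ Y).inv ≫ Y ◁ e ≫ ε with hk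
  have heg : e ≫ g = 𝟙 (𝟙_ C) := by
    rw [hg, ← h₂]
    simp [tensorHom_def', ← whisker_exchange]
  have hfk : f ≫ k = 𝟙 (𝟙_ C) := by
    rw [hk, ← h₂]
    simp [MonoidalCategory.tensorHom_def, ← unitors_equal]
  have hge : g ≫ e = 𝟙 X := by
    have z := zig₁
    rw [h₁] at z
    simp only [comp_whiskerRight, MonoidalCategory.tensorHom_def, Category.assoc,
      associator_naturality_middle_assoc, associator_naturality_left_assoc] at z
    have coh : (λ_ (𝟙_ C)).inv ▷ X ≫ (α_ (𝟙_ C) (𝟙_ C) X).hom = 𝟙_ C ◁ (λ_ X).inv := by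
      coherence
    rw [reassoc_of% coh, whisker_exchange_assoc] at z
    simp only [← MonoidalCategory.whiskerLeft_comp, ← Category.assoc, ← hg] at z
    calc g ≫ e = (λ_ X).inv ≫ (𝟙_ C ◁ g ≫ e ▷ 𝟙_ C) ≫ (ρ_ X).hom := by
          simp [← unitors_equal]
      _ = (λ_ X).inv ≫ (e ▷ X ≫ X ◁ g) ≫ (ρ_ X).hom := by rw [whisker_exchange]
      _ = 𝟙 X := by rw [z]; simp
  have hkf : k ≫ f = 𝟙 Y := by
    have z := zig₂
    rw [h₁] at z
    simp only [MonoidalCategory.whiskerLeft_comp, tensorHom_def', Category.assoc,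
      associator_inv_naturality_middle_assoc, associator_inv_naturality_right_assoc] at z
    have coh : Y ◁ (λ_ (𝟙_ C)).inv ≫ (α_ Y (𝟙_ C) (𝟙_ C)).inv = (ρ_ Y).inv ▷ 𝟙_ C := by
      coherence
    rw [reassoc_of% coh, ← whisker_exchange_assoc] at z
    simp only [← comp_whiskerRight, ← Category.assoc, ← hk] at z
    calc k ≫ f = (ρ_ Y).inv ≫ (k ▷ 𝟙_ C ≫ 𝟙_ C ◁ f) ≫ (λ_ Y).hom := by
          simp [unitors_equal]
      _ = (ρ_ Y).inv ≫ (Y ◁ f ≫ k ▷ Y) ≫ (λ_ Y).hom := by rw [← whisker_exchange]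
      _ = 𝟙 Y := by rw [z]; simp
  have ie : IsIso e := ⟨g, heg, hge⟩
  have if' : IsIso f := ⟨k, hfk, hkf⟩
  exact ⟨ie, if', ⟨(asIso e).symm⟩, ⟨(asIso f).symm⟩⟩
end

section
/- Let K be a field, and let U, V, W be finite-dimensional K-vector spaces with V nonzero. For every K-vector space Z and every K-bilinear map b : Hom_K(V, W) × Hom_K(U, V) → Z that is End_K(V)-balanced, i.e., b(g ∘ e, h) = b(g, e ∘ h) for all e ∈ End_K(V), g ∈ Hom_K(V, W), h ∈ Hom_K(U, V), there exists a unique K-linear map ĥ : Hom_K(U, W) → Z such that ĥ(g ∘ h) = b(g, h) for all g ∈ Hom_K(V, W) and h ∈ Hom_K(U, V). -/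
/-- Composition exhibits `Hom_K(U, W)` as the balanced tensor product
`Hom_K(V, W) ⊗_{End_K(V)} Hom_K(U, V)`: every `End_K(V)`-balanced bilinear map out of
`Hom_K(V, W) × Hom_K(U, V)` factors uniquely through composition. -/
theorem stmt_9 (K : Type*) [Field K] (U V W : Type*)
    [AddCommGroup U] [Module K U] [AddCommGroup V] [Module K V]
    [AddCommGroup W] [Module K W]
    [FiniteDimensional K U] [FiniteDimensional K V] [FiniteDimensional K W]
    [Nontrivial V]
    (Z : Type*) [AddCommGroup Z] [Module K Z]
    (b : (V →ₗ[K] W) →ₗ[K] (U →ₗ[K] V) →ₗ[K] Z)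
    (hb : ∀ (e : Module.End K V) (g : V →ₗ[K] W) (h : U →ₗ[K] V),
      b (g ∘ₗ e) h = b g (e ∘ₗ h)) :
    ∃! F : (U →ₗ[K] W) →ₗ[K] Z,
      ∀ (g : V →ₗ[K] W) (h : U →ₗ[K] V), F (g ∘ₗ h) = b g h := by
  obtain ⟨v, hv⟩ := exists_ne (0 : V)
  obtain ⟨φ, hφ⟩ := LinearMap.exists_leftInverse_of_injective (LinearMap.toSpanSingleton K V v)
    (LinearMap.ker_toSpanSingleton (R := K) (M := V) hv)
  have hφv : φ v = 1 := by simpa using LinearMap.congr_fun hφ 1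
  set B := Module.finBasis K U with hB
  have hdecW : ∀ f : U →ₗ[K] W,
      f = ∑ i, (φ.smulRight (f (B i))) ∘ₗ ((B.coord i).smulRight v) := by
    intro f
    apply B.ext
    intro j
    simp only [LinearMap.coe_sum, Finset.sum_apply, LinearMap.comp_apply,
      LinearMap.smulRight_apply, Module.Basis.coord_apply, Module.Basis.repr_self]
    rw [Finset.sum_eq_single j]
    · simp [hφv]
    · intro i _ hij
      simp [Finsupp.single_apply, Ne.symm hij]
    · simp
  have hdecV : ∀ f : U →ₗ[K] V,
      f = ∑ i, (φ.smulRight (f (B i))) ∘ₗ ((B.coord i).smulRight v) := by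
    intro f
    apply B.ext
    intro j
    simp only [LinearMap.coe_sum, Finset.sum_apply, LinearMap.comp_apply,
      LinearMap.smulRight_apply, Module.Basis.coord_apply, Module.Basis.repr_self]
    rw [Finset.sum_eq_single j]
    · simp [hφv]
    · intro i _ hij
      simp [Finsupp.single_apply, Ne.symm hij]
    · simp
  have hsr_add : ∀ w w' : W, φ.smulRight (w + w') = φ.smulRight w + φ.smulRight w' := by
    intro w w'; ext x; simp [smul_add]
  have hsr_smul : ∀ (c : K) (w : W), φ.smulRight (c • w) = c • φ.smulRight w := by
    intro c w; ext x
    simp only [LinearMap.smulRight_apply, LinearMap.smul_apply]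
    rw [smul_comm]
  refine ⟨{ toFun := fun f => ∑ i, b (φ.smulRight (f (B i))) ((B.coord i).smulRight v),
            map_add' := ?_, map_smul' := ?_ }, ?_, ?_⟩
  · intro f g
    rw [← Finset.sum_add_distrib]
    refine Finset.sum_congr rfl fun i _ => ?_
    simp [hsr_add]
  · intro c f
    rw [Finset.smul_sum]
    simp only [RingHom.id_apply]
    refine Finset.sum_congr rfl fun i _ => ?_
    simp [hsr_smul]
  · intro g h
    simp only [LinearMap.coe_mk, AddHom.coe_mk, LinearMap.comp_apply]
    have key : ∀ i ∈ Finset.univ, b (φ.smulRight (g (h (B i)))) ((B.coord i).smulRight v)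
        = b g ((φ.smulRight (h (B i))) ∘ₗ ((B.coord i).smulRight v)) := by
      intro i _
      have h1 : φ.smulRight (g (h (B i))) = g ∘ₗ (φ.smulRight (h (B i))) := by
        ext x; simp
      rw [h1, hb]
    rw [Finset.sum_congr rfl key, ← map_sum]
    congr 1
    exact (hdecV h).symm
  · intro F hF
    ext f
    conv_lhs => rw [hdecW f]
    simp [hF]
end

section
/- Let C be a braided monoidal category with braiding β, and let X be an object admitting a right dual X* (with coevaluation η_X : 𝟙 → X ⊗ X* and evaluation ε_X : X* ⊗ X → 𝟙 satisfying the zigzag identities) such that X* also admits a right dual X** (with coevaluation η_{X*} : 𝟙 → X* ⊗ X** and evaluation ε_{X*} : X** ⊗ X* → 𝟙). Define u : X** → X as the composite X** ≅ X** ⊗ 𝟙 → X** ⊗ (X ⊗ X*) [using η_X] ≅ (X** ⊗ X) ⊗ X* → (X ⊗ X**) ⊗ X* [using β_{X**,X} ⊗ id] ≅ X ⊗ (X** ⊗ X*) → X ⊗ 𝟙 ≅ X [using ε_{X*}], and define v : X → X** as the composite X ≅ 𝟙 ⊗ X → (X* ⊗ X**) ⊗ X [using η_{X*}] ≅ X*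 ⊗ (X** ⊗ X) → X* ⊗ (X ⊗ X**) [using id ⊗ β⁻¹_{X,X**}] ≅ (X* ⊗ X) ⊗ X** → 𝟙 ⊗ X** ≅ X** [using ε_X]. Then u and v are mutually inverse: u ∘ v = id_X and v ∘ u = id_{X**}. In particular the double dual X** is isomorphic to X. -/
open CategoryTheory MonoidalCategory

/-- In a braided monoidal category with duals, the braiding determines an isomorphism
between the double dual `X**` and `X`, with explicit mutually inverse morphisms `u`
and `v` built from the braiding and the duality data. -/
theorem stmt_14 (C : Type*) [Category C] [MonoidalCategory C] [BraidedCategory C]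
    (X X' X'' : C)
    (η₁ : 𝟙_ C ⟶ X ⊗ X') (ε₁ : X' ⊗ X ⟶ 𝟙_ C)
    (zig₁ : η₁ ▷ X ≫ (α_ X X' X).hom ≫ X ◁ ε₁ = (λ_ X).hom ≫ (ρ_ X).inv)
    (zig₂ : X' ◁ η₁ ≫ (α_ X' X X').inv ≫ ε₁ ▷ X' = (ρ_ X').hom ≫ (λ_ X').inv)
    (η₂ : 𝟙_ C ⟶ X' ⊗ X'') (ε₂ : X'' ⊗ X' ⟶ 𝟙_ C)
    (zig₃ : η₂ ▷ X' ≫ (α_ X' X'' X').hom ≫ X' ◁ ε₂ = (λ_ X').hom ≫ (ρ_ X').inv)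
    (zig₄ : X'' ◁ η₂ ≫ (α_ X'' X' X'').inv ≫ ε₂ ▷ X'' = (ρ_ X'').hom ≫ (λ_ X'').inv)
    (u : X'' ⟶ X) (v : X ⟶ X'')
    (hu : u = (ρ_ X'').inv ≫ (X'' ◁ η₁) ≫ (α_ X'' X X').inv ≫
      ((β_ X'' X).hom ▷ X') ≫ (α_ X X'' X').hom ≫ (X ◁ ε₂) ≫ (ρ_ X).hom)
    (hv : v = (λ_ X).inv ≫ (η₂ ▷ X) ≫ (α_ X' X'' X).hom ≫
      (X' ◁ (β_ X X'').inv) ≫ (α_ X' X X'').inv ≫ (ε₁ ▷ X'') ≫ (λ_ X'').hom) :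
    v ≫ u = 𝟙 X ∧ u ≫ v = 𝟙 X'' := by
  letI p1 : ExactPairing X X' := ⟨η₁, ε₁, zig₂, zig₁⟩
  letI p2 : ExactPairing X' X'' := ⟨η₂, ε₂, zig₄, zig₃⟩
  letI pB : ExactPairing X' X := BraidedCategory.exactPairing_swap X X'
  let i : X ≅ X'' := rightDualIso pB p2
  have hρβ : (ρ_ X).inv ≫ (β_ X (𝟙_ C)).hom = (λ_ X).inv := by
    rw [← cancel_mono (λ_ X).hom]; simp [CategoryTheory.braiding_leftUnitor]
  have hbl : (β_ (𝟙_ C) X).inv ≫ (λ_ X).hom = (ρ_ X).hom := by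
    rw [← CategoryTheory.braiding_rightUnitor X]; simp
  have hvi : v = i.hom := by
    have h : i.hom = (ρ_ X).inv ≫ X ◁ η₂ ≫ X ◁ (𝟙 X') ▷ X'' ≫ (α_ X X' X'').inv ≫
        ((β_ X X').hom ≫ ε₁) ▷ X'' ≫ (λ_ X'').hom := rfl
    rw [hv, h]
    simp only [id_whiskerRight, MonoidalCategory.whiskerLeft_id, Category.id_comp, comp_whiskerRight]
    calc (λ_ X).inv ≫ η₂ ▷ X ≫ (α_ X' X'' X).hom ≫ X' ◁ (β_ X X'').inv ≫
          (α_ X' X X'').inv ≫ ε₁ ▷ X'' ≫ (λ_ X'').hom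
        = (ρ_ X).inv ≫ (X ◁ η₂ ≫ (β_ X (X' ⊗ X'')).hom) ≫ (α_ X' X'' X).hom ≫
          X' ◁ (β_ X X'').inv ≫ (α_ X' X X'').inv ≫ ε₁ ▷ X'' ≫ (λ_ X'').hom := by
          rw [BraidedCategory.braiding_naturality_right, ← hρβ]; simp
      _ = _ := by
          rw [BraidedCategory.braiding_tensor_right_hom]
          simp
  have hui : u = i.inv := by
    have h : i.inv = (ρ_ X'').inv ≫ X'' ◁ (η₁ ≫ (β_ X' X).inv) ≫ X'' ◁ (𝟙 X') ▷ X ≫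
        (α_ X'' X' X).inv ≫ ε₂ ▷ X ≫ (λ_ X).hom := rfl
    rw [hu, h]
    simp only [id_whiskerRight, MonoidalCategory.whiskerLeft_id, Category.id_comp,
      MonoidalCategory.whiskerLeft_comp]
    calc (ρ_ X'').inv ≫ X'' ◁ η₁ ≫ (α_ X'' X X').inv ≫ (β_ X'' X).hom ▷ X' ≫
          (α_ X X'' X').hom ≫ X ◁ ε₂ ≫ (ρ_ X).hom
        = (ρ_ X'').inv ≫ X'' ◁ η₁ ≫ (α_ X'' X X').inv ≫ (β_ X'' X).hom ▷ X' ≫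
          (α_ X X'' X').hom ≫ ((β_ (X'' ⊗ X') X).inv ≫ ε₂ ▷ X) ≫ (λ_ X).hom := by
          rw [← BraidedCategory.braiding_inv_naturality_right, ← hbl]; simp
      _ = _ := by
          rw [BraidedCategory.braiding_tensor_left_inv]
          simp
  refine ⟨?_, ?_⟩
  · rw [hvi, hui]; exact i.hom_inv_id
  · rw [hvi, hui]; exact i.inv_hom_id
end
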